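/- Let V be a group and H ≤ V a subgroup that normally generates V. If H is free abelian of finite rank and the abelianization V/[V,V] is isomorphic to H (as abstract groups), then the quotient map V → V/[V,V] restricts to an isomorphism H → V/[V,V], and consequently H ∩ [V,V] is trivial. -/

import Mathlib

/-- If `H ≤ V` normally generates `V`, `H` is free abelian of finite rank `n`,
and the abelianization of `V` is also isomorphic to `ℤⁿ`, then the quotient map restricts to
an isomorphism `H → V/[V,V]`; consequently `H ∩ [V,V]` is trivial. -/
theorem stmt7 (V : Type*) [Group V] (H : Subgroup V) (n : ℕ)
    (hgen : Subgroup.normalClosure (H : Set V) = ⊤)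
    (e₁ : H ≃* Multiplicative (Fin n → ℤ))
    (e₂ : Abelianization V ≃* Multiplicative (Fin n → ℤ)) :
    Function.Bijective (fun h : H => Abelianization.of (h : V)) ∧
      H ⊓ commutator V = ⊥ := by
  have hofsurj : Function.Surjective (Abelianization.of : V →* Abelianization V) :=
    QuotientGroup.mk_surjective
  -- the image of H in the abelianization is everything
  have hmap : H.map (Abelianization.of : V →* Abelianization V) = ⊤ := by
    have h1 : (Subgroup.normalClosure (H : Set V)).map Abelianization.of =
        Subgroup.normalClosure ((Abelianization.of : V →* Abelianization V) '' H) :=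
      Subgroup.map_normalClosure _ _ hofsurj
    rw [hgen] at h1
    have h2 : ((Abelianization.of : V →* Abelianization V) '' H) =
        ((H.map (Abelianization.of : V →* Abelianization V) : Subgroup (Abelianization V)) :
          Set (Abelianization V)) := rfl
    rw [h2, Subgroup.normalClosure_eq_self] at h1
    rw [← h1]
    exact (Subgroup.map_top_of_surjective _ hofsurj)
  set f : H →* Abelianization V :=
    (Abelianization.of : V →* Abelianization V).comp H.subtype with hf
  have hfsurj : Function.Surjective f := by
    intro x
    have : x ∈ H.map (Abelianization.of : V →* Abelianization V) := by
      rw [hmap]; trivial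
    obtain ⟨v, hv, hvx⟩ := this
    exact ⟨⟨v, hv⟩, hvx⟩
  -- the endomorphism of ℤⁿ
  set g : Multiplicative (Fin n → ℤ) →* Multiplicative (Fin n → ℤ) :=
    (e₂.toMonoidHom.comp f).comp e₁.symm.toMonoidHom with hg
  have hgsurj : Function.Surjective g :=
    (e₂.surjective.comp hfsurj).comp e₁.symm.surjective
  -- additive version
  set a : (Fin n → ℤ) →+ (Fin n → ℤ) :=
    AddMonoidHom.mk' (fun x => Multiplicative.toAdd (g (Multiplicative.ofAdd x)))
      (fun x y => by simpa using g.map_mul (Multiplicative.ofAdd x) (Multiplicative.ofAdd y))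
      with ha
  have hasurj : Function.Surjective a := fun x => by
    obtain ⟨y, hy⟩ := hgsurj (Multiplicative.ofAdd x)
    exact ⟨Multiplicative.toAdd y, by simp [ha, hy]⟩
  have hainj : Function.Injective a :=
    OrzechProperty.injective_of_surjective_endomorphism a.toIntLinearMap hasurj
  have hginj : Function.Injective g := fun x y hxy => by
    have := hainj (a₁ := Multiplicative.toAdd x) (a₂ := Multiplicative.toAdd y)
      (by simp [ha, hxy])
    simpa using this
  have hfinj : Function.Injective f := by
    have : f = (e₂.symm.toMonoidHom.comp g).comp e₁.toMonoidHom := by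
      ext x
      simp [hg]
    rw [this]
    exact (e₂.symm.injective.comp hginj).comp e₁.injective
  refine ⟨⟨hfinj, hfsurj⟩, ?_⟩
  rw [eq_bot_iff]
  intro x hx
  obtain ⟨hxH, hxc⟩ := hx
  have h1 : f ⟨x, hxH⟩ = 1 := by
    simp only [hf, MonoidHom.comp_apply, Subgroup.coe_subtype]
    exact (QuotientGroup.eq_one_iff x).mpr hxc
  have h2 : (⟨x, hxH⟩ : H) = 1 := hfinj (by rw [h1, map_one])
  simpa using congrArg Subtype.val h2
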